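/- Let M ≥ 1, 0 < η ≤ 1/2, and set c = (7.5/η)^{1 + 2/M}. Let ‖·‖ be any norm on ℝ^d, let a_1, …, a_N, b_1, …, b_N ∈ ℝ^d, let Z be uniformly distributed over the list (a_1, …, a_N, b_1, …, b_N), and suppose σ > 0 satisfies E‖Z − EZ‖^M ≤ σ^M. Let X be a random vector in ℝ^d whose law has density proportional to exp(−‖x‖/(cσ)) with respect to Lebesgue measure. Then for every measurable randomized classifier g : ℝ^d → [0,1], (1/(2N)) Σ_{i=1}^N E[g(a_i + X)] + (1/(2N)) Σ_{j=1}^N E[1 − g(b_j + X)] ≤ 1/2 + η. -/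

import Mathlib

open MeasureTheory
open scoped ENNReal NNReal

lemma seminorm_pi_continuous {d : ℕ} (p : Seminorm ℝ (Fin d → ℝ)) : Continuous p := by
  set C : NNReal := ∑ i : Fin d, ‖p (fun j => if i = j then (1:ℝ) else 0)‖₊ with hC
  have hle : p ≤ C • normSeminorm ℝ (Fin d → ℝ) := by
    intro v
    have hv := pi_eq_sum_univ v
    calc p v = p (∑ i : Fin d, (v i) • fun j => if i = j then (1:ℝ) else 0) := by rw [← hv]
      _ ≤ ∑ i : Fin d, p ((v i) • fun j => if i = j then (1:ℝ) else 0) := by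
          exact Finset.le_sum_of_subadditive p (map_zero p).le (map_add_le_add p) _ _
      _ ≤ ∑ i : Fin d, ‖v‖ * p (fun j => if i = j then (1:ℝ) else 0) := by
          refine Finset.sum_le_sum fun i _ => ?_
          rw [map_smul_eq_mul]
          exact mul_le_mul_of_nonneg_right (by simpa using norm_le_pi_norm v i)
            (apply_nonneg p _)
      _ = ‖v‖ * ∑ i : Fin d, p (fun j => if i = j then (1:ℝ) else 0) := by
          rw [Finset.mul_sum]
      _ = (C : ℝ) * ‖v‖ := by
          rw [mul_comm]; congr 1
          simp only [hC, NNReal.coe_sum, coe_nnnorm]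
          exact Finset.sum_congr rfl fun i _ => (Real.norm_of_nonneg (apply_nonneg p _)).symm
      _ = (C • normSeminorm ℝ (Fin d → ℝ)) v := rfl
  refine Seminorm.continuous_of_le ?_ hle
  have : ⇑(C • normSeminorm ℝ (Fin d → ℝ)) = fun v => (C : ℝ) * ‖v‖ := rfl
  rw [this]
  exact continuous_const.mul continuous_norm

section core
variable {d : ℕ} (p : Seminorm ℝ (Fin d → ℝ)) (K s : ℝ)
  (g : (Fin d → ℝ) → ℝ)

-- the density as an ℝ-valued function
noncomputable def Fden (w : Fin d → ℝ) : ℝ := K * Real.exp (-(p w) / s)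

lemma Fden_nonneg (hK : 0 < K) (w : Fin d → ℝ) : 0 ≤ Fden p K s w :=
  mul_nonneg hK.le (Real.exp_nonneg _)

lemma Fden_cont : Continuous (Fden p K s) :=
  continuous_const.mul (((seminorm_pi_continuous p).neg.div_const s).rexp)

lemma rep_integral (hK : 0 < K)
    (μ : Measure (Fin d → ℝ))
    (hdens : μ = volume.withDensity (fun v => ENNReal.ofReal (Fden p K s v)))
    (hgmeas : Measurable g) (hg : ∀ v, g v ∈ Set.Icc (0:ℝ) 1)
    [IsProbabilityMeasure μ] (x : Fin d → ℝ) :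
    (∫ v, g (x + v) ∂μ) = ∫ w, Fden p K s (w - x) * g w ∧
    Integrable (fun w => Fden p K s (w - x) * g w) volume := by
  set f : (Fin d → ℝ) → NNReal := fun v => (Fden p K s v).toNNReal with hf
  have hfm : Measurable f := (Fden_cont p K s).measurable.real_toNNReal
  have hcoe : ∀ v, ((f v : ℝ)) = Fden p K s v := fun v =>
    Real.coe_toNNReal _ (Fden_nonneg p K s hK v)
  have hμ : μ = volume.withDensity (fun v => (f v : ℝ≥0∞)) := hdens
  have hIμ : Integrable (fun v => g (x + v)) μ := by
    refine Integrable.mono' (integrable_const 1) ((hgmeas.comp (by fun_prop)).aestronglyMeasurable) ?_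
    refine Filter.Eventually.of_forall fun v => ?_
    rw [Real.norm_of_nonneg (hg _).1]; exact (hg _).2
  have key : (∫ v, g (x + v) ∂μ) = ∫ v, Fden p K s v * g (x + v) := by
    rw [hμ, integral_withDensity_eq_integral_smul hfm]
    refine integral_congr_ae (Filter.Eventually.of_forall fun v => ?_)
    show f v • g (x + v) = _
    rw [NNReal.smul_def, smul_eq_mul, hcoe]
  have keyI : Integrable (fun v => Fden p K s v * g (x + v)) volume := by
    have := (integrable_withDensity_iff_integrable_smul hfm
      (g := fun v => g (x + v))).mp (hμ ▸ hIμ)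
    refine this.congr (Filter.Eventually.of_forall fun v => ?_)
    show f v • g (x + v) = _
    rw [NNReal.smul_def, smul_eq_mul, hcoe]
  have htrans : (∫ v, Fden p K s v * g (x + v)) =
      ∫ w, Fden p K s (w - x) * g w := by
    rw [← integral_add_right_eq_self (fun w => Fden p K s (w - x) * g w) x]
    refine integral_congr_ae (Filter.Eventually.of_forall fun v => ?_)
    simp [add_sub_cancel_right, add_comm]
  constructor
  · rw [key, htrans]
  · have := keyI.comp_add_right (-x)
    refine this.congr (Filter.Eventually.of_forall fun w => ?_)
    simp [sub_eq_add_neg, add_comm, add_assoc, add_left_comm]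
end core

section compare
variable {d : ℕ} (p : Seminorm ℝ (Fin d → ℝ)) {K s : ℝ}
  {g : (Fin d → ℝ) → ℝ}

lemma int_bounds (μ : Measure (Fin d → ℝ)) [IsProbabilityMeasure μ]
    (hgmeas : Measurable g) (hg : ∀ v, g v ∈ Set.Icc (0:ℝ) 1) (x : Fin d → ℝ) :
    (∫ v, g (x + v) ∂μ) ∈ Set.Icc (0:ℝ) 1 := by
  have hI : Integrable (fun v => g (x + v)) μ := by
    refine Integrable.mono' (integrable_const 1)
      ((hgmeas.comp (by fun_prop)).aestronglyMeasurable) ?_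
    exact Filter.Eventually.of_forall fun v => by
      rw [Real.norm_of_nonneg (hg _).1]; exact (hg _).2
  constructor
  · exact integral_nonneg fun v => (hg _).1
  · calc (∫ v, g (x + v) ∂μ) ≤ ∫ _, (1:ℝ) ∂μ :=
        integral_mono hI (integrable_const 1) fun v => (hg _).2
      _ = 1 := by simp

lemma shift_compare (hK : 0 < K) (hs : 0 < s)
    (μ : Measure (Fin d → ℝ)) [IsProbabilityMeasure μ]
    (hdens : μ = volume.withDensity (fun v => ENNReal.ofReal (Fden p K s v)))
    (hgmeas : Measurable g) (hg : ∀ v, g v ∈ Set.Icc (0:ℝ) 1) (x y : Fin d → ℝ) :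
    (∫ v, g (x + v) ∂μ) - (∫ v, g (y + v) ∂μ) ≤ 2 * (p (x - y) / s) := by
  obtain ⟨hx, hIx⟩ := rep_integral p K s g hK μ hdens hgmeas hg x
  obtain ⟨hy, hIy⟩ := rep_integral p K s g hK μ hdens hgmeas hg y
  set t : ℝ := p (x - y) / s with ht
  have ht0 : 0 ≤ t := div_nonneg (apply_nonneg p _) hs.le
  have hGx := int_bounds μ hgmeas hg x
  have hGy := int_bounds μ hgmeas hg y
  have hmain : (∫ v, g (x + v) ∂μ) ≤ Real.exp t * ∫ v, g (y + v) ∂μ := by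
    rw [hx, hy, ← integral_const_mul]
    refine integral_mono hIx (hIy.const_mul _) fun w => ?_
    have htri : p (w - y) ≤ p (w - x) + p (x - y) := by
      have := map_add_le_add p (w - x) (x - y)
      simpa [sub_add_sub_cancel] using this
    have hFle : Fden p K s (w - x) ≤ Real.exp t * Fden p K s (w - y) := by
      unfold Fden
      rw [mul_left_comm, ← Real.exp_add]
      refine mul_le_mul_of_nonneg_left (Real.exp_le_exp.mpr ?_) hK.le
      rw [ht, ← add_div]
      exact div_le_div_of_nonneg_right (by linarith) hs.le
    calc Fden p K s (w - x) * g w ≤ (Real.exp t * Fden p K s (w - y)) * g w :=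
          mul_le_mul_of_nonneg_right hFle (hg _).1
      _ = Real.exp t * (Fden p K s (w - y) * g w) := by ring
  by_cases h2 : Real.exp t ≤ 2
  · have hexpineq : Real.exp t - 1 ≤ t * Real.exp t := by
      have h1 := Real.add_one_le_exp (-t)
      rw [Real.exp_neg] at h1
      have h3 := mul_inv_cancel₀ (ne_of_gt (Real.exp_pos t))
      nlinarith [Real.exp_pos t]
    have e1 : 1 ≤ Real.exp t := Real.one_le_exp ht0
    nlinarith [hGy.1, hGy.2,
      mul_le_mul_of_nonneg_left hGy.2 (sub_nonneg.mpr e1),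
      mul_le_mul_of_nonneg_left h2 ht0]
  · push_neg at h2
    have hlog : Real.log 2 ≤ t := by
      rw [← Real.log_exp t]
      exact Real.log_le_log (by norm_num) h2.le
    have := Real.log_two_gt_d9
    nlinarith [hGx.2, hGy.1]
end compare

lemma scalar_bound {u θ M : ℝ} (hu : 0 ≤ u) (hθ : 0 < θ) (hM : 1 ≤ M) :
    u ≤ θ + θ ^ (1 - M) * u ^ M := by
  rcases le_or_gt u θ with h | h
  · have : 0 ≤ θ ^ (1 - M) * u ^ M :=
      mul_nonneg (Real.rpow_nonneg hθ.le _) (Real.rpow_nonneg hu _)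
    linarith
  · have hupos : 0 < u := hθ.trans h
    have h1 : u ^ (1 - M) ≤ θ ^ (1 - M) :=
      Real.rpow_le_rpow_of_nonpos hθ h.le (by linarith)
    have h2 : u ^ M * u ^ (1 - M) = u := by
      rw [← Real.rpow_add hupos]; norm_num
    have h3 : u ^ M * u ^ (1 - M) ≤ u ^ M * θ ^ (1 - M) :=
      mul_le_mul_of_nonneg_left h1 (Real.rpow_nonneg hupos.le _)
    nlinarith [Real.rpow_nonneg hupos.le M]

/-- let `M ≥ 1`, `0 < η ≤ 1/2`, `c = (7.5/η)^{1+2/M}`, let `‖·‖`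
be any norm on `ℝ^d` (a seminorm `p` with `p x = 0 → x = 0`), let
`a_1, …, a_N, b_1, …, b_N ∈ ℝ^d`, let `Z` be uniform on the combined list and
suppose `σ > 0` satisfies `E‖Z - EZ‖^M ≤ σ^M`. Let `X` have density
proportional to `exp(-‖x‖/(cσ))` w.r.t. Lebesgue measure. Then every
measurable randomized classifier `g : ℝ^d → [0,1]` has membership-inference
success probability
`(1/(2N)) ∑_i E[g(a_i + X)] + (1/(2N)) ∑_j E[1 - g(b_j + X)] ≤ 1/2 + η`. -/
theorem statement_10 (d N : ℕ) (hN : 0 < N) (M η σ : ℝ)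
    (hM : 1 ≤ M) (hη0 : 0 < η) (hη1 : η ≤ 1 / 2) (hσ : 0 < σ)
    (p : Seminorm ℝ (Fin d → ℝ)) (hpdef : ∀ v : Fin d → ℝ, p v = 0 → v = 0)
    (a b : Fin N → (Fin d → ℝ))
    (hmom :
      (1 / (2 * N : ℝ)) *
          ((∑ i, p (a i - (1 / (2 * N : ℝ)) • (∑ i, a i + ∑ j, b j)) ^ M) +
            ∑ j, p (b j - (1 / (2 * N : ℝ)) • (∑ i, a i + ∑ j, b j)) ^ M) ≤
        σ ^ M)
    (μ : Measure (Fin d → ℝ)) [IsProbabilityMeasure μ]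
    (K : ℝ) (hK : 0 < K)
    (hdens : μ = volume.withDensity
      (fun v => ENNReal.ofReal
        (K * Real.exp (-(p v) / ((7.5 / η) ^ (1 + 2 / M) * σ)))))
    (g : (Fin d → ℝ) → ℝ) (hgmeas : Measurable g)
    (hg : ∀ v, g v ∈ Set.Icc (0 : ℝ) 1) :
    (1 / (2 * N : ℝ)) * (∑ i, ∫ v, g (a i + v) ∂μ) +
        (1 / (2 * N : ℝ)) * (∑ j, ∫ v, (1 - g (b j + v)) ∂μ) ≤
      1 / 2 + η := by
  have hN' : (0:ℝ) < N := by exact_mod_cast hN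
  set c : ℝ := (7.5 / η) ^ (1 + 2 / M) with hcdef
  -- basic facts about c
  have hB1 : (1:ℝ) ≤ 7.5 / η := by
    rw [le_div_iff₀ hη0]; linarith
  have h1e : (1:ℝ) ≤ 1 + 2 / M := by
    have : (0:ℝ) ≤ 2 / M := div_nonneg (by norm_num) (by linarith)
    linarith
  have hBc : 7.5 / η ≤ c := by
    simpa [Real.rpow_one] using Real.rpow_le_rpow_of_exponent_le hB1 h1e
  have hc4 : 4 / η ≤ c :=
    le_trans (div_le_div_of_nonneg_right (by norm_num) hη0.le) hBc
  have hcpos : 0 < c := lt_of_lt_of_le (by positivity) hc4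
  have hspos : 0 < c * σ := mul_pos hcpos hσ
  have hdens' : μ = volume.withDensity
      (fun v => ENNReal.ofReal (Fden p K (c * σ) v)) := by
    rw [hdens]; rfl
  set G : (Fin d → ℝ) → ℝ := fun x => ∫ v, g (x + v) ∂μ with hG
  have hcomp : ∀ x y, G x - G y ≤ 2 * (p (x - y) / (c * σ)) :=
    fun x y => shift_compare p hK hspos μ hdens' hgmeas hg x y
  have hbnd : ∀ x, G x ∈ Set.Icc (0:ℝ) 1 := fun x => int_bounds μ hgmeas hg x
  set m : Fin d → ℝ := (1 / (2 * N : ℝ)) • (∑ i, a i + ∑ j, b j) with hm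
  -- rewrite the second sum
  have hsub : ∀ j, (∫ v, (1 - g (b j + v)) ∂μ) = 1 - G (b j) := by
    intro j
    have hI : Integrable (fun v => g (b j + v)) μ := by
      refine Integrable.mono' (integrable_const 1)
        ((hgmeas.comp (by fun_prop)).aestronglyMeasurable) ?_
      exact Filter.Eventually.of_forall fun v => by
        rw [Real.norm_of_nonneg (hg _).1]; exact (hg _).2
    rw [integral_sub (integrable_const 1) hI]
    simp [hG]
  -- moment bound
  set θ : ℝ := c * σ * η / 4 with hθdef
  have hθpos : 0 < θ := by positivity
  have hσθ : σ ≤ θ := by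
    rw [hθdef]
    rw [div_le_iff₀ hη0] at hc4
    nlinarith
  have hmain : (∑ i, p (a i - m)) + (∑ j, p (b j - m)) ≤ 2 * N * (2 * θ) := by
    have hS : (∑ i, p (a i - m) ^ M) + (∑ j, p (b j - m) ^ M)
        ≤ 2 * N * σ ^ M := by
      have h2N : (0:ℝ) < 2 * N := by positivity
      calc (∑ i, p (a i - m) ^ M) + (∑ j, p (b j - m) ^ M)
          = (2 * N) * ((1 / (2 * N : ℝ)) *
            ((∑ i, p (a i - m) ^ M) + (∑ j, p (b j - m) ^ M))) := by
            field_simp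
        _ ≤ (2 * N) * σ ^ M := by
            exact mul_le_mul_of_nonneg_left hmom h2N.le
    have hθM : θ ^ (1 - M) * σ ^ M ≤ θ := by
      have h1 : σ ^ M ≤ θ ^ M := Real.rpow_le_rpow hσ.le hσθ (by linarith)
      have h2 : θ ^ (1 - M) * θ ^ M = θ := by
        rw [← Real.rpow_add hθpos]; norm_num
      have h3 : θ ^ (1 - M) * σ ^ M ≤ θ ^ (1 - M) * θ ^ M :=
        mul_le_mul_of_nonneg_left h1 (Real.rpow_nonneg hθpos.le _)
      linarith
    have hA : (∑ i, p (a i - m)) ≤ N * θ + θ ^ (1 - M) * ∑ i, p (a i - m) ^ M := by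
      calc (∑ i, p (a i - m)) ≤ ∑ i, (θ + θ ^ (1 - M) * p (a i - m) ^ M) :=
            Finset.sum_le_sum fun i _ => scalar_bound (apply_nonneg p _) hθpos hM
        _ = N * θ + θ ^ (1 - M) * ∑ i, p (a i - m) ^ M := by
            rw [Finset.sum_add_distrib, Finset.sum_const, ← Finset.mul_sum]
            simp [mul_comm]
    have hBs : (∑ j, p (b j - m)) ≤ N * θ + θ ^ (1 - M) * ∑ j, p (b j - m) ^ M := by
      calc (∑ j, p (b j - m)) ≤ ∑ j, (θ + θ ^ (1 - M) * p (b j - m) ^ M) :=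
            Finset.sum_le_sum fun j _ => scalar_bound (apply_nonneg p _) hθpos hM
        _ = N * θ + θ ^ (1 - M) * ∑ j, p (b j - m) ^ M := by
            rw [Finset.sum_add_distrib, Finset.sum_const, ← Finset.mul_sum]
            simp [mul_comm]
    have hθnn : 0 ≤ θ ^ (1 - M) := Real.rpow_nonneg hθpos.le _
    nlinarith [mul_le_mul_of_nonneg_left hS hθnn]
  -- comparison step
  have hdiff : (∑ i, G (a i)) - (∑ j, G (b j)) ≤ 2 * N * η := by
    have hA : (∑ i, G (a i)) - N * G m ≤
        (2 / (c * σ)) * ∑ i, p (a i - m) := by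
      have : (∑ i, (G (a i) - G m)) ≤ ∑ i, 2 * (p (a i - m) / (c * σ)) :=
        Finset.sum_le_sum fun i _ => hcomp (a i) m
      rw [Finset.sum_sub_distrib, Finset.sum_const] at this
      rw [Finset.mul_sum]
      refine le_trans (by simpa [nsmul_eq_mul] using this) ?_
      refine le_of_eq (Finset.sum_congr rfl fun i _ => ?_)
      field_simp
    have hBs : N * G m - (∑ j, G (b j)) ≤
        (2 / (c * σ)) * ∑ j, p (b j - m) := by
      have : (∑ j, (G m - G (b j))) ≤ ∑ j, 2 * (p (m - b j) / (c * σ)) :=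
        Finset.sum_le_sum fun j _ => hcomp m (b j)
      rw [Finset.sum_sub_distrib, Finset.sum_const] at this
      rw [Finset.mul_sum]
      refine le_trans (by simpa [nsmul_eq_mul] using this) ?_
      refine le_of_eq (Finset.sum_congr rfl fun j _ => ?_)
      rw [map_sub_rev]
      field_simp
    have hfin : (2 / (c * σ)) * ((∑ i, p (a i - m)) + (∑ j, p (b j - m)))
        ≤ 2 * N * η := by
      have h1 : (2 / (c * σ)) * ((∑ i, p (a i - m)) + (∑ j, p (b j - m)))
          ≤ (2 / (c * σ)) * (2 * N * (2 * θ)) :=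
        mul_le_mul_of_nonneg_left hmain (by positivity)
      have h2 : (2 / (c * σ)) * (2 * N * (2 * θ)) = 2 * N * η := by
        rw [hθdef]; field_simp; ring
      linarith
    have hsplit : (2 / (c * σ)) * ((∑ i, p (a i - m)) + (∑ j, p (b j - m)))
        = (2 / (c * σ)) * (∑ i, p (a i - m)) + (2 / (c * σ)) * (∑ j, p (b j - m)) :=
      mul_add _ _ _
    linarith [hA, hBs, hfin]
  -- final assembly
  have hrw : (1 / (2 * N : ℝ)) * (∑ i, ∫ v, g (a i + v) ∂μ) +
      (1 / (2 * N : ℝ)) * (∑ j, ∫ v, (1 - g (b j + v)) ∂μ)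
      = 1 / 2 + (1 / (2 * N : ℝ)) * ((∑ i, G (a i)) - (∑ j, G (b j))) := by
    have : (∑ j, ∫ v, (1 - g (b j + v)) ∂μ) = N - ∑ j, G (b j) := by
      rw [Finset.sum_congr rfl fun j _ => hsub j, Finset.sum_sub_distrib]
      simp
    rw [this]
    have : (∑ i, ∫ v, g (a i + v) ∂μ) = ∑ i, G (a i) := rfl
    rw [this]
    field_simp
    ring
  rw [hrw]
  have : (1 / (2 * N : ℝ)) * ((∑ i, G (a i)) - (∑ j, G (b j)))
      ≤ (1 / (2 * N : ℝ)) * (2 * N * η) :=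
    mul_le_mul_of_nonneg_left hdiff (by positivity)
  have h2 : (1 / (2 * N : ℝ)) * (2 * N * η) = η := by field_simp
  linarith
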